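/- Let P(λ) = A_mλᵐ + A_{m−1}λ^{m−1} + ⋯ + A₁λ + A₀ be an n×n quaternion matrix polynomial all of whose coefficients A₀, A₁, …, A_m are unitary quaternion matrices. If λ₀ ∈ ℍ is a right eigenvalue of P(λ), then 1/2 < |λ₀| < 2. -/

import Mathlib

open scoped Quaternion
open Matrix

noncomputable section

namespace RightEigAux

lemma re_sum {α : Type*} (s : Finset α) (f : α → ℍ[ℝ]) :
    (∑ i ∈ s, f i).re = ∑ i ∈ s, (f i).re :=
  map_sum (QuaternionAlgebra.reₗ (-1 : ℝ) (0 : ℝ) (-1 : ℝ)) f s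

lemma sum_normsq_eq_re {n : ℕ} (v : Fin n → ℍ[ℝ]) :
    ∑ k, ‖v k‖ ^ 2 = (star v ⬝ᵥ v).re := by
  rw [dotProduct, re_sum]
  refine Finset.sum_congr rfl fun k _ => ?_
  have h : (star v) k * v k = ((Quaternion.normSq (v k) : ℝ) : ℍ[ℝ]) := by
    simpa using Quaternion.star_mul_self (v k)
  rw [h, Quaternion.re_coe, Quaternion.normSq_eq_norm_mul_self, sq]

lemma sum_normSq_mulVec {n : ℕ} (A : Matrix (Fin n) (Fin n) ℍ[ℝ])
    (hA : Aᴴ * A = 1) (x : Fin n → ℍ[ℝ]) :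
    ∑ k, ‖A.mulVec x k‖ ^ 2 = ∑ k, ‖x k‖ ^ 2 := by
  have key : star (A.mulVec x) ⬝ᵥ (A.mulVec x) = star x ⬝ᵥ x := by
    rw [Matrix.star_mulVec, Matrix.dotProduct_mulVec, Matrix.vecMul_vecMul, hA,
      Matrix.vecMul_one]
  rw [sum_normsq_eq_re, sum_normsq_eq_re, key]

/-- the ℓ² norm of a quaternion vector -/
def enorm {n : ℕ} (v : Fin n → ℍ[ℝ]) : ℝ :=
  ‖(WithLp.equiv 2 (Fin n → ℍ[ℝ])).symm v‖

lemma enorm_sq {n : ℕ} (v : Fin n → ℍ[ℝ]) :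
    enorm v ^ 2 = ∑ k, ‖v k‖ ^ 2 := by
  simpa [enorm] using
    PiLp.norm_sq_eq_of_L2 (fun _ : Fin n => ℍ[ℝ]) ((WithLp.equiv 2 _).symm v)

lemma enorm_nonneg {n : ℕ} (v : Fin n → ℍ[ℝ]) : 0 ≤ enorm v := norm_nonneg _

lemma enorm_pos {n : ℕ} {v : Fin n → ℍ[ℝ]} (hv : v ≠ 0) : 0 < enorm v := by
  rw [enorm, norm_pos_iff]
  intro h
  apply hv
  have := congrArg (WithLp.equiv 2 (Fin n → ℍ[ℝ])) h
  simpa using this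

lemma enorm_eq_of_sq_eq {n : ℕ} {v w : Fin n → ℍ[ℝ]}
    (h : ∑ k, ‖v k‖ ^ 2 = ∑ k, ‖w k‖ ^ 2) : enorm v = enorm w := by
  have h2 : enorm v ^ 2 = enorm w ^ 2 := by rw [enorm_sq, enorm_sq, h]
  rw [← Real.sqrt_sq (enorm_nonneg v), ← Real.sqrt_sq (enorm_nonneg w), h2]

lemma enorm_mul_right {n : ℕ} (v : Fin n → ℍ[ℝ]) (c : ℍ[ℝ]) :
    enorm (fun k => v k * c) = enorm v * ‖c‖ := by
  have h2 : enorm (fun k => v k * c) ^ 2 = (enorm v * ‖c‖) ^ 2 := by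
    rw [enorm_sq, mul_pow, enorm_sq, Finset.sum_mul]
    refine Finset.sum_congr rfl fun k _ => ?_
    rw [norm_mul, mul_pow]
  rw [← Real.sqrt_sq (enorm_nonneg (fun k => v k * c)),
    ← Real.sqrt_sq (mul_nonneg (enorm_nonneg v) (norm_nonneg c)), h2]

end RightEigAux

open RightEigAux

/-- If all coefficients `A₀, …, A_m` of the quaternion matrix polynomial
`P(λ) = ∑ Aᵢ λⁱ` are unitary quaternion matrices and `λ₀` is a right eigenvalue of `P`
(i.e. `∑ i, Aᵢ x λ₀ⁱ = 0` for some nonzero `x`), then `1/2 < |λ₀| < 2`. -/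
theorem right_eigenvalue_bound_unitary {m n : ℕ}
    (A : Fin (m + 1) → Matrix (Fin n) (Fin n) ℍ[ℝ])
    (hU : ∀ i, A i * (A i)ᴴ = 1 ∧ (A i)ᴴ * A i = 1)
    (q : ℍ[ℝ])
    (heig : ∃ x : Fin n → ℍ[ℝ], x ≠ 0 ∧
      ∀ k, ∑ i : Fin (m + 1), (A i).mulVec x k * q ^ (i : ℕ) = 0) :
    1 / 2 < ‖q‖ ∧ ‖q‖ < 2 := by
  obtain ⟨x, hx, heq⟩ := heig
  set r : ℝ := ‖q‖ with hr
  have hr0 : 0 ≤ r := norm_nonneg q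
  set c : ℝ := enorm x with hc
  have hcpos : 0 < c := enorm_pos hx
  -- vectors in the L2 space
  set e : (Fin n → ℍ[ℝ]) → PiLp 2 (fun _ : Fin n => ℍ[ℝ]) :=
    fun v => (WithLp.equiv 2 (Fin n → ℍ[ℝ])).symm v with he
  set W : Fin (m + 1) → PiLp 2 (fun _ : Fin n => ℍ[ℝ]) :=
    fun i => e (fun k => (A i).mulVec x k * q ^ (i : ℕ)) with hW
  have hWnorm : ∀ i, ‖W i‖ = c * r ^ (i : ℕ) := by
    intro i
    have h1 : ‖W i‖ = RightEigAux.enorm (fun k => (A i).mulVec x k * q ^ (i : ℕ)) := rfl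
    rw [h1, enorm_mul_right, norm_pow,
      enorm_eq_of_sq_eq (sum_normSq_mulVec (A i) (hU i).2 x)]
  have hWsum : ∑ i : Fin (m + 1), W i = 0 := by
    have hesum : ∀ (s : Finset (Fin (m + 1)))
        (f : Fin (m + 1) → Fin n → ℍ[ℝ]),
        e (∑ i ∈ s, f i) = ∑ i ∈ s, e (f i) := by
      intro s f
      induction s using Finset.induction with
      | empty => rfl
      | @insert _ _ hni ih =>
        rw [Finset.sum_insert hni, Finset.sum_insert hni, ← ih]; rfl
    have h0 : (fun k => ∑ i : Fin (m + 1), (A i).mulVec x k * q ^ (i : ℕ))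
        = (0 : Fin n → ℍ[ℝ]) := funext heq
    calc ∑ i : Fin (m + 1), W i
        = e (∑ i : Fin (m + 1), fun k => (A i).mulVec x k * q ^ (i : ℕ)) :=
          (hesum Finset.univ _).symm
      _ = e (fun k => ∑ i : Fin (m + 1), (A i).mulVec x k * q ^ (i : ℕ)) := by
          refine congrArg e (funext fun k => ?_)
          exact Finset.sum_apply k Finset.univ (fun i k => (A i).mulVec x k * q ^ (i : ℕ))
      _ = 0 := by rw [h0]; rfl
  -- Upper bound: ‖q‖ < 2
  have hupper : r < 2 := by
    by_contra hcon
    push_neg at hcon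
    have hsplit : ∑ i : Fin m, W i.castSucc + W (Fin.last m) = 0 := by
      rw [← Fin.sum_univ_castSucc]; exact hWsum
    have hle : ‖W (Fin.last m)‖ ≤ ∑ i : Fin m, ‖W i.castSucc‖ := by
      have hlast : W (Fin.last m) = -∑ i : Fin m, W i.castSucc :=
        eq_neg_of_add_eq_zero_right hsplit
      rw [hlast, norm_neg]
      exact norm_sum_le _ _
    rw [hWnorm] at hle
    have hlast : ((Fin.last m : Fin (m + 1)) : ℕ) = m := rfl
    rw [hlast] at hle
    have hsum' : ∑ i : Fin m, ‖W i.castSucc‖ = c * ∑ i ∈ Finset.range m, r ^ i := by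
      rw [Finset.mul_sum, ← Fin.sum_univ_eq_sum_range]
      refine Finset.sum_congr rfl fun i _ => ?_
      rw [hWnorm, Fin.coe_castSucc]
    rw [hsum'] at hle
    have hle2 : r ^ m ≤ ∑ i ∈ Finset.range m, r ^ i :=
      le_of_mul_le_mul_left (by linarith [hle]) hcpos
    have hgeom : (∑ i ∈ Finset.range m, r ^ i) * (r - 1) = r ^ m - 1 :=
      geom_sum_mul r m
    have hpow1 : (1 : ℝ) ≤ r ^ m := by
      have h1 : (1 : ℝ) ^ m ≤ r ^ m := pow_le_pow_left₀ (by norm_num) (by linarith) m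
      simpa using h1
    nlinarith [mul_le_mul_of_nonneg_right hle2 (by linarith : (0:ℝ) ≤ r - 1)]
  -- Lower bound: 1/2 < ‖q‖
  have hlower : 1 / 2 < r := by
    by_contra hcon
    push_neg at hcon
    have hsplit : W 0 + ∑ i : Fin m, W i.succ = 0 := by
      rw [← Fin.sum_univ_succ]; exact hWsum
    have hle : ‖W 0‖ ≤ ∑ i : Fin m, ‖W i.succ‖ := by
      have h0 : W 0 = -∑ i : Fin m, W i.succ := eq_neg_of_add_eq_zero_left hsplit
      rw [h0, norm_neg]
      exact norm_sum_le _ _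
    rw [hWnorm] at hle
    simp only [Fin.val_zero, pow_zero, mul_one] at hle
    have hsum' : ∑ i : Fin m, ‖W i.succ‖ = c * ∑ i ∈ Finset.range m, r ^ (i + 1) := by
      rw [Finset.mul_sum, ← Fin.sum_univ_eq_sum_range]
      refine Finset.sum_congr rfl fun i _ => ?_
      rw [hWnorm, Fin.val_succ]
    rw [hsum'] at hle
    have hle2 : (1 : ℝ) ≤ ∑ i ∈ Finset.range m, r ^ (i + 1) := by
      have := le_of_mul_le_mul_left (by linarith [hle] : c * 1 ≤ c * ∑ i ∈ Finset.range m, r ^ (i + 1)) hcpos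
      linarith
    have hterm : ∀ i ∈ Finset.range m, r ^ (i + 1) ≤ (1 / 2 : ℝ) ^ (i + 1) :=
      fun i _ => pow_le_pow_left₀ hr0 hcon (i + 1)
    have hle3 : ∑ i ∈ Finset.range m, r ^ (i + 1)
        ≤ ∑ i ∈ Finset.range m, (1 / 2 : ℝ) ^ (i + 1) :=
      Finset.sum_le_sum hterm
    have hgeom : (∑ i ∈ Finset.range m, (1 / 2 : ℝ) ^ i) * ((1 / 2 : ℝ) - 1)
        = (1 / 2 : ℝ) ^ m - 1 := geom_sum_mul (1 / 2 : ℝ) m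
    have hshift : ∑ i ∈ Finset.range m, (1 / 2 : ℝ) ^ (i + 1)
        = (1 / 2 : ℝ) * ∑ i ∈ Finset.range m, (1 / 2 : ℝ) ^ i := by
      rw [Finset.mul_sum]
      exact Finset.sum_congr rfl fun i _ => by ring
    have hppos : (0 : ℝ) < (1 / 2 : ℝ) ^ m := by positivity
    nlinarith
  exact ⟨hlower, hupper⟩
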